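/- Let (Y, d_Y) be a compact geodesic metric space, M > 0, d_ℓ the induced length metric on X_M = Y × (0, M], and ω ∈ X_M a basepoint. A sequence x_i = (p_i, s_i) in X_M satisfies (x_i, x_j)_ω → ∞ as i, j → ∞ (i.e., for every R there is N such that (x_i, x_j)_ω ≥ R whenever i, j ≥ N) if and only if s_i → 0 and the sequence (p_i) converges in Y. -/

import Mathlib

open Set

/-- The Balogh–Schramm distance on `Y × (0, ∞)`:
`ρ((p,s),(q,t)) = 2·log((d_Y(p,q) + max(s,t))/√(s·t))`. -/
noncomputable def BS {Y : Type*} [MetricSpace Y] (x y : Y × ℝ) : ℝ :=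
  2 * Real.log ((dist x.1 y.1 + max x.2 y.2) / Real.sqrt (x.2 * y.2))

/-- Length of the map `γ` over the set `S` with respect to the distance
function `d`: the supremum over finite monotone partitions in `S` of the sums
of consecutive distances (as in Mathlib's `eVariationOn`). -/
noncomputable def lengthOn {X : Type*} (d : X → X → ℝ) (γ : ℝ → X) (S : Set ℝ) : ENNReal :=
  ⨆ p : ℕ × { u : ℕ → ℝ // Monotone u ∧ ∀ i, u i ∈ S },
    ∑ i ∈ Finset.range p.1, ENNReal.ofReal (d (γ (p.2.1 i)) (γ (p.2.1 (i + 1))))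

lemma BS_eq {Y : Type*} [MetricSpace Y] {x y : Y × ℝ} (hx : 0 < x.2) (hy : 0 < y.2) :
    BS x y = 2 * Real.log (dist x.1 y.1 + max x.2 y.2) - Real.log x.2 - Real.log y.2 := by
  have hmax : 0 < max x.2 y.2 := lt_max_of_lt_left hx
  have harg : 0 < dist x.1 y.1 + max x.2 y.2 := by positivity
  have hst : 0 < x.2 * y.2 := mul_pos hx hy
  unfold BS
  rw [Real.log_div harg.ne' (Real.sqrt_ne_zero'.2 hst), Real.log_sqrt hst.le,
    Real.log_mul hx.ne' hy.ne']
  ring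

lemma BS_nonneg {Y : Type*} [MetricSpace Y] {x y : Y × ℝ} (hx : 0 < x.2) (hy : 0 < y.2) :
    0 ≤ BS x y := by
  rw [BS_eq hx hy]
  have h1 : Real.log x.2 + Real.log y.2 = Real.log (x.2 * y.2) := (Real.log_mul hx.ne' hy.ne').symm
  have h2 : Real.log (x.2 * y.2) ≤ 2 * Real.log (dist x.1 y.1 + max x.2 y.2) := by
    have : x.2 * y.2 ≤ (dist x.1 y.1 + max x.2 y.2)^2 := by
      have hxm : x.2 ≤ max x.2 y.2 := le_max_left _ _
      have hym : y.2 ≤ max x.2 y.2 := le_max_right _ _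
      nlinarith [dist_nonneg (x := x.1) (y := y.1), hx.le, hy.le]
    calc Real.log (x.2 * y.2) ≤ Real.log ((dist x.1 y.1 + max x.2 y.2)^2) :=
          Real.log_le_log (mul_pos hx hy) this
      _ = 2 * Real.log (dist x.1 y.1 + max x.2 y.2) := by
          rw [Real.log_pow]; push_cast; ring
  linarith

lemma key_ineq {A B s t u : ℝ} (hA : 0 ≤ A) (hB : 0 ≤ B) (hs : 0 < s) (ht : 0 < t) (hu : 0 < u) :
    t * (A + B + max s u) ≤ (A + max s t) * (B + max t u) := by
  have h1 : t ≤ max s t := le_max_right _ _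
  have h2 : t ≤ max t u := le_max_left _ _
  have h3 : t * max s u ≤ max s t * max t u := by
    rcases le_total s u with h | h
    · rw [max_eq_right h]
      exact mul_le_mul h1 (le_max_right _ _) hu.le (le_trans ht.le h1)
    · rw [max_eq_left h]
      calc t * s = s * t := mul_comm _ _
        _ ≤ max s t * max t u := mul_le_mul (le_max_left _ _) h2 ht.le (le_trans hs.le (le_max_left _ _))
  nlinarith [mul_nonneg hA hB, mul_le_mul_of_nonneg_left h2 hA, mul_le_mul_of_nonneg_left h1 hB]

lemma BS_triangle {Y : Type*} [MetricSpace Y] {x y z : Y × ℝ}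
    (hx : 0 < x.2) (hy : 0 < y.2) (hz : 0 < z.2) : BS x z ≤ BS x y + BS y z := by
  rw [BS_eq hx hz, BS_eq hx hy, BS_eq hy hz]
  have key : Real.log (y.2 * (dist x.1 z.1 + max x.2 z.2)) ≤
      Real.log ((dist x.1 y.1 + max x.2 y.2) * (dist y.1 z.1 + max y.2 z.2)) := by
    apply Real.log_le_log (by positivity)
    calc y.2 * (dist x.1 z.1 + max x.2 z.2)
        ≤ y.2 * (dist x.1 y.1 + dist y.1 z.1 + max x.2 z.2) := by
          have := dist_triangle x.1 y.1 z.1; nlinarith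
      _ ≤ _ := key_ineq dist_nonneg dist_nonneg hx hy hz
  rw [Real.log_mul hy.ne' (by positivity), Real.log_mul (by positivity) (by positivity)] at key
  linarith

lemma lengthOn_le_of_bound {X : Type*} (d : X → X → ℝ) (γ : ℝ → X) {a b : ℝ} (hab : a ≤ b)
    (f : ℝ → ℝ) (hf : MonotoneOn f (Icc a b))
    (hbd : ∀ u ∈ Icc a b, ∀ v ∈ Icc a b, u ≤ v → d (γ u) (γ v) ≤ f v - f u) :
    lengthOn d γ (Icc a b) ≤ ENNReal.ofReal (f b - f a) := by
  apply iSup_le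
  rintro ⟨n, u, hu_mono, hu_mem⟩
  calc ∑ i ∈ Finset.range n, ENNReal.ofReal (d (γ (u i)) (γ (u (i+1))))
      ≤ ∑ i ∈ Finset.range n, ENNReal.ofReal (f (u (i+1)) - f (u i)) := by
        apply Finset.sum_le_sum
        intro i _
        exact ENNReal.ofReal_le_ofReal
          (hbd _ (hu_mem i) _ (hu_mem (i+1)) (hu_mono (Nat.le_succ i)))
    _ = ENNReal.ofReal (∑ i ∈ Finset.range n, (f (u (i+1)) - f (u i))) := by
        rw [ENNReal.ofReal_sum_of_nonneg]
        intro i _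
        exact sub_nonneg.2 (hf (hu_mem i) (hu_mem (i+1)) (hu_mono (Nat.le_succ i)))
    _ = ENNReal.ofReal (f (u n) - f (u 0)) := by
        congr 1
        exact Finset.sum_range_sub (fun i => f (u i)) n
    _ ≤ ENNReal.ofReal (f b - f a) := by
        apply ENNReal.ofReal_le_ofReal
        have h1 : f (u n) ≤ f b := hf (hu_mem n) (right_mem_Icc.2 hab) (hu_mem n).2
        have h2 : f a ≤ f (u 0) := hf (left_mem_Icc.2 hab) (hu_mem 0) (hu_mem 0).1
        linarith

lemma le_lengthOn {X : Type*} (d : X → X → ℝ) (γ : ℝ → X) {a b : ℝ} (hab : a ≤ b) :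
    ENNReal.ofReal (d (γ a) (γ b)) ≤ lengthOn d γ (Icc a b) := by
  have hmono : Monotone (fun i : ℕ => if i = 0 then a else b) := by
    apply monotone_nat_of_le_succ
    intro i
    rcases Nat.eq_zero_or_pos i with h | h
    · simp [h, hab]
    · simp [Nat.pos_iff_ne_zero.1 h]
  have hmem : ∀ i, (if i = 0 then a else b) ∈ Icc a b := by
    intro i; split <;> simp [hab]
  have := le_iSup (fun p : ℕ × { u : ℕ → ℝ // Monotone u ∧ ∀ i, u i ∈ Icc a b } =>
    ∑ i ∈ Finset.range p.1, ENNReal.ofReal (d (γ (p.2.1 i)) (γ (p.2.1 (i + 1)))))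
    (⟨1, ⟨fun i => if i = 0 then a else b, hmono, hmem⟩⟩)
  simpa [lengthOn] using this

/-- Membership in `X_M = Y × (0, M]`. -/
def inXM {Y : Type*} (M : ℝ) (x : Y × ℝ) : Prop := 0 < x.2 ∧ x.2 ≤ M

/-- The induced length metric on `X_M = Y × (0, M]`: the infimum of
Balogh–Schramm lengths of continuous paths joining `x` and `y` inside `X_M`. -/
noncomputable def dLen {Y : Type*} [MetricSpace Y] (M : ℝ) (x y : Y × ℝ) : ℝ :=
  (sInf {L : ENNReal | ∃ (a b : ℝ) (γ : ℝ → Y × ℝ), a ≤ b ∧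
      ContinuousOn γ (Icc a b) ∧ γ a = x ∧ γ b = y ∧
      (∀ t ∈ Icc a b, inXM M (γ t)) ∧
      lengthOn (BS (Y := Y)) γ (Icc a b) = L}).toReal

/-- A metric space is geodesic: any two points are joined by an isometric
embedding of `[0, dist p q]`. -/
def GeodesicSpace (Y : Type*) [MetricSpace Y] : Prop :=
  ∀ p q : Y, ∃ α : ℝ → Y, α 0 = p ∧ α (dist p q) = q ∧
    ∀ s ∈ Icc (0:ℝ) (dist p q), ∀ t ∈ Icc (0:ℝ) (dist p q), dist (α s) (α t) = |s - t|

lemma sInf_le_bound {Y : Type*} [MetricSpace Y] (hgeo : GeodesicSpace Y)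
    {M : ℝ} (hM : 0 < M) (x y : Y × ℝ) (hx : inXM M x) (hy : inXM M y) :
    sInf {L : ENNReal | ∃ (a b : ℝ) (γ : ℝ → Y × ℝ), a ≤ b ∧
      ContinuousOn γ (Icc a b) ∧ γ a = x ∧ γ b = y ∧
      (∀ t ∈ Icc a b, inXM M (γ t)) ∧
      lengthOn (BS (Y := Y)) γ (Icc a b) = L} ≤
    ENNReal.ofReal ((Real.log (min M (max (dist x.1 y.1) (max x.2 y.2))) - Real.log x.2)
      + 2 / (min M (max (dist x.1 y.1) (max x.2 y.2))) * dist x.1 y.1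
      + (Real.log (min M (max (dist x.1 y.1) (max x.2 y.2))) - Real.log y.2)) := by
  obtain ⟨p, s⟩ := x
  obtain ⟨q, t⟩ := y
  obtain ⟨hs, hsM⟩ := hx
  obtain ⟨ht, htM⟩ := hy
  dsimp only at hs hsM ht htM ⊢
  set D := dist p q with hD
  set h := min M (max D (max s t)) with hh
  have hD0 : 0 ≤ D := dist_nonneg
  have hsh : s ≤ h := le_min hsM (le_max_of_le_right (le_max_left s t))
  have hth : t ≤ h := le_min htM (le_max_of_le_right (le_max_right s t))
  have hh0 : 0 < h := lt_of_lt_of_le hs hsh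
  have hhM : h ≤ M := min_le_left _ _
  obtain ⟨α, hα0, hαD, hαiso⟩ := hgeo p q
  rw [← hD] at hαD hαiso
  set L1 := Real.log h - Real.log s with hL1def
  set L3 := Real.log h - Real.log t with hL3def
  have hL1 : 0 ≤ L1 := sub_nonneg.2 (Real.log_le_log hs hsh)
  have hL3 : 0 ≤ L3 := sub_nonneg.2 (Real.log_le_log ht hth)
  set b := L1 + D + L3 with hbdef
  have hb : (0:ℝ) ≤ b := by simp only [hbdef]; linarith
  have hexp1 : s * Real.exp L1 = h := by
    rw [hL1def, Real.exp_sub, Real.exp_log hh0, Real.exp_log hs]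
    field_simp
  have hexp3 : h * Real.exp (-L3) = t := by
    rw [hL3def, neg_sub, Real.exp_sub, Real.exp_log ht, Real.exp_log hh0]
    field_simp
  set clamp : ℝ → ℝ := fun u => min (max (u - L1) 0) D with hclamp
  have hclamp_mem : ∀ u, clamp u ∈ Icc 0 D := fun u =>
    ⟨le_min (le_max_right _ _) hD0, min_le_right _ _⟩
  have hclamp_mono : Monotone clamp := fun a c hac =>
    min_le_min (max_le_max (by linarith) le_rfl) le_rfl
  set γ : ℝ → Y × ℝ := fun u => if u ≤ L1 then (p, s * Real.exp u)
    else if u ≤ L1 + D then (α (clamp u), h) else (q, h * Real.exp (L1 + D - u)) with hγ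
  set f : ℝ → ℝ := fun u => min u L1 + (2/h) * clamp u + max (u - (L1 + D)) 0 with hf
  have hγ1 : ∀ u ∈ Icc 0 L1, γ u = (p, s * Real.exp u) := by
    intro u hu
    simp only [hγ]
    rw [if_pos hu.2]
  have hclampL1 : clamp L1 = 0 := by
    simp only [hclamp, sub_self, max_self]
    exact min_eq_left hD0
  have hclampL1D : clamp (L1 + D) = D := by
    simp only [hclamp, add_sub_cancel_left, max_eq_left hD0, min_self]
  have hγ2 : ∀ u ∈ Icc L1 (L1 + D), γ u = (α (clamp u), h) := by
    intro u hu
    simp only [hγ]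
    split_ifs with h1 h2
    · have hu' : u = L1 := le_antisymm h1 hu.1
      subst hu'
      rw [hclampL1, hα0, hexp1]
    · rfl
    · exact absurd hu.2 h2
  have hγ3 : ∀ u ∈ Icc (L1 + D) b, γ u = (q, h * Real.exp (L1 + D - u)) := by
    intro u hu
    simp only [hγ]
    split_ifs with h1 h2
    · have hD0' : D = 0 := le_antisymm (by linarith [hu.1]) hD0
      have hpq : p = q := eq_of_dist_eq_zero (hD ▸ hD0')
      have hu' : u = L1 := le_antisymm h1 (by linarith [hu.1])
      subst hu'
      have he : L1 + D - L1 = 0 := by rw [hD0']; ring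
      rw [he, Real.exp_zero, mul_one, hexp1, hpq]
    · have hu' : u = L1 + D := le_antisymm h2 hu.1
      subst hu'
      have he : L1 + D - (L1 + D) = 0 := by ring
      rw [hclampL1D, hαD, he, Real.exp_zero, mul_one]
    · rfl
  have hγ0 : γ 0 = (p, s) := by
    simp only [hγ]
    rw [if_pos hL1, Real.exp_zero, mul_one]
  have hγb : γ b = (q, t) := by
    simp only [hγ]
    split_ifs with h1 h2
    · have hD0' : D = 0 := by simp only [hbdef] at h1; linarith
      have hL30 : L3 = 0 := by simp only [hbdef] at h1; linarith
      have hpq : p = q := eq_of_dist_eq_zero (hD ▸ hD0')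
      have hth' : t = h := by
        have := hexp3; rw [hL30, neg_zero, Real.exp_zero, mul_one] at this; exact this.symm
      have hbb : b = L1 := by rw [hbdef, hD0', hL30]; ring
      rw [hbb, hexp1, hpq, hth']
    · have hL30 : L3 = 0 := by simp only [hbdef] at h2; linarith
      have hth' : t = h := by
        have := hexp3; rw [hL30, neg_zero, Real.exp_zero, mul_one] at this; exact this.symm
      have hcb : clamp b = D := by
        simp only [hclamp, hbdef]
        rw [hL30]
        have : L1 + D + 0 - L1 = D := by ring
        rw [this, max_eq_left hD0, min_self]
      rw [hcb, hαD, hth']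
    · have : L1 + D - b = -L3 := by rw [hbdef]; ring
      rw [this, hexp3]
  have hmemγ : ∀ u ∈ Icc (0:ℝ) b, inXM M (γ u) := by
    intro u hu
    simp only [hγ]
    split_ifs with h1 h2
    · refine ⟨by positivity, ?_⟩
      have : Real.exp u ≤ Real.exp L1 := Real.exp_le_exp.2 h1
      have h2' : s * Real.exp u ≤ s * Real.exp L1 := by nlinarith
      rw [hexp1] at h2'
      exact le_trans h2' hhM
    · exact ⟨hh0, hhM⟩
    · refine ⟨by positivity, ?_⟩
      have he : Real.exp (L1 + D - u) ≤ 1 := Real.exp_le_one_iff.2 (by linarith)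
      have : h * Real.exp (L1 + D - u) ≤ h * 1 := by nlinarith
      rw [mul_one] at this
      exact le_trans this hhM
  have hf1 : ∀ u ∈ Icc (0:ℝ) L1, f u = u := by
    intro u hu
    simp only [hf]
    have hc : clamp u = 0 := by
      simp only [hclamp]
      rw [max_eq_right (by linarith [hu.2]), min_eq_left hD0]
    rw [hc, min_eq_left hu.2, max_eq_right (by linarith [hu.2])]
    ring
  have hf2 : ∀ u ∈ Icc L1 (L1 + D), f u = L1 + (2/h) * (u - L1) := by
    intro u hu
    simp only [hf]
    have hc : clamp u = u - L1 := by
      simp only [hclamp]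
      rw [max_eq_left (by linarith [hu.1]), min_eq_left (by linarith [hu.2])]
    rw [hc, min_eq_right hu.1, max_eq_right (by linarith [hu.2])]
    ring
  have hf3 : ∀ u ∈ Icc (L1 + D) b, f u = L1 + (2/h) * D + (u - (L1 + D)) := by
    intro u hu
    simp only [hf]
    have hc : clamp u = D := by
      simp only [hclamp]
      rw [max_eq_left (by linarith [hu.1]), min_eq_right (by linarith [hu.1])]
    rw [hc, min_eq_right (by linarith [hu.1]), max_eq_left (by linarith [hu.1])]
  have hfmono : Monotone f := by
    have m1 : Monotone fun u : ℝ => min u L1 := fun a c hac => min_le_min hac le_rfl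
    have m2 : Monotone fun u : ℝ => (2/h) * clamp u := fun a c hac =>
      mul_le_mul_of_nonneg_left (hclamp_mono hac) (by positivity)
    have m3 : Monotone fun u : ℝ => max (u - (L1 + D)) 0 := fun a c hac =>
      max_le_max (by linarith) le_rfl
    exact (m1.add m2).add m3
  have hBS1 : ∀ u v : ℝ, u ≤ v →
      BS ((p, s * Real.exp u) : Y × ℝ) (p, s * Real.exp v) = v - u := by
    intro u v huv
    have e1 : (0:ℝ) < s * Real.exp u := by positivity
    have e2 : (0:ℝ) < s * Real.exp v := by positivity
    rw [BS_eq (x := ((p, s * Real.exp u) : Y × ℝ)) (y := (p, s * Real.exp v)) e1 e2]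
    dsimp only
    rw [dist_self, zero_add,
      max_eq_right (by nlinarith [Real.exp_le_exp.2 huv, Real.exp_pos u]),
      Real.log_mul hs.ne' (Real.exp_ne_zero v), Real.log_mul hs.ne' (Real.exp_ne_zero u),
      Real.log_exp, Real.log_exp]
    ring
  have hBS2 : ∀ a' b' : ℝ, a' ∈ Icc 0 D → b' ∈ Icc 0 D →
      BS ((α a', h) : Y × ℝ) (α b', h) ≤ 2/h * |b' - a'| := by
    intro a' b' ha hb
    rw [BS_eq (x := ((α a', h) : Y × ℝ)) (y := (α b', h)) hh0 hh0]
    dsimp only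
    rw [hαiso a' ha b' hb, max_self, abs_sub_comm a' b']
    have hdd : 0 ≤ |b' - a'| := abs_nonneg _
    have hlog : Real.log ((|b' - a'| + h)/h) ≤ (|b' - a'| + h)/h - 1 :=
      Real.log_le_sub_one_of_pos (by positivity)
    rw [Real.log_div (by positivity) hh0.ne'] at hlog
    have he1 : (|b' - a'| + h)/h - 1 = |b' - a'|/h := by field_simp; ring
    have he2 : 2/h * |b' - a'| = 2 * (|b' - a'|/h) := by ring
    rw [he2]
    linarith [hlog, he1 ▸ hlog]
  have hBS3 : ∀ u v : ℝ, u ≤ v →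
      BS ((q, h * Real.exp (L1 + D - u)) : Y × ℝ) (q, h * Real.exp (L1 + D - v)) = v - u := by
    intro u v huv
    have e1 : (0:ℝ) < h * Real.exp (L1 + D - u) := by positivity
    have e2 : (0:ℝ) < h * Real.exp (L1 + D - v) := by positivity
    rw [BS_eq (x := ((q, h * Real.exp (L1 + D - u)) : Y × ℝ)) e1 e2]
    dsimp only
    have hle : L1 + D - v ≤ L1 + D - u := by linarith
    have hmx : h * Real.exp (L1 + D - v) ≤ h * Real.exp (L1 + D - u) := by
      nlinarith [Real.exp_le_exp.2 hle, Real.exp_pos (L1 + D - v)]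
    rw [dist_self, zero_add, max_eq_left hmx,
      Real.log_mul hh0.ne' (Real.exp_ne_zero (L1 + D - u)),
      Real.log_mul hh0.ne' (Real.exp_ne_zero (L1 + D - v)),
      Real.log_exp, Real.log_exp]
    ring
  have hE1 : ∀ u ∈ Icc (0:ℝ) L1, ∀ v ∈ Icc (0:ℝ) L1, u ≤ v → BS (γ u) (γ v) ≤ f v - f u := by
    intro u hu v hv huv
    rw [hγ1 u hu, hγ1 v hv, hf1 u hu, hf1 v hv, hBS1 u v huv]
  have hE2 : ∀ u ∈ Icc L1 (L1 + D), ∀ v ∈ Icc L1 (L1 + D), u ≤ v →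
      BS (γ u) (γ v) ≤ f v - f u := by
    intro u hu v hv huv
    have hcu : clamp u = u - L1 := by
      simp only [hclamp]
      rw [max_eq_left (by linarith [hu.1]), min_eq_left (by linarith [hu.2])]
    have hcv : clamp v = v - L1 := by
      simp only [hclamp]
      rw [max_eq_left (by linarith [hv.1]), min_eq_left (by linarith [hv.2])]
    calc BS (γ u) (γ v) = BS ((α (u - L1), h) : Y × ℝ) (α (v - L1), h) := by
          rw [hγ2 u hu, hγ2 v hv, hcu, hcv]
      _ ≤ 2/h * |(v - L1) - (u - L1)| := hBS2 (u - L1) (v - L1)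
          ⟨by linarith [hu.1], by linarith [hu.2]⟩ ⟨by linarith [hv.1], by linarith [hv.2]⟩
      _ = f v - f u := by
          rw [hf2 u hu, hf2 v hv, abs_of_nonneg (by linarith)]
          ring
  have hE3 : ∀ u ∈ Icc (L1 + D) b, ∀ v ∈ Icc (L1 + D) b, u ≤ v →
      BS (γ u) (γ v) ≤ f v - f u := by
    intro u hu v hv huv
    rw [hγ3 u hu, hγ3 v hv, hf3 u hu, hf3 v hv, hBS3 u v huv]
    linarith
  have hL1b : L1 ∈ Icc (0:ℝ) b := ⟨hL1, by simp only [hbdef]; linarith⟩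
  have hL1Db : L1 + D ∈ Icc (0:ℝ) b := ⟨by linarith, by simp only [hbdef]; linarith⟩
  have hpos : ∀ w ∈ Icc (0:ℝ) b, 0 < (γ w).2 := fun w hw => (hmemγ w hw).1
  have hKey : ∀ u ∈ Icc (0:ℝ) b, ∀ v ∈ Icc (0:ℝ) b, u ≤ v → BS (γ u) (γ v) ≤ f v - f u := by
    intro u hu v hv huv
    rcases le_or_gt v L1 with h1 | h1
    · exact hE1 u ⟨hu.1, le_trans huv h1⟩ v ⟨hv.1, h1⟩ huv
    rcases le_or_gt u L1 with h2 | h2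
    · rcases le_or_gt v (L1 + D) with h3 | h3
      · calc BS (γ u) (γ v) ≤ BS (γ u) (γ L1) + BS (γ L1) (γ v) :=
              BS_triangle (hpos u hu) (hpos L1 hL1b) (hpos v hv)
          _ ≤ (f L1 - f u) + (f v - f L1) := add_le_add
              (hE1 u ⟨hu.1, h2⟩ L1 ⟨hL1, le_rfl⟩ h2)
              (hE2 L1 ⟨le_rfl, by linarith⟩ v ⟨h1.le, h3⟩ h1.le)
          _ = f v - f u := by ring
      · calc BS (γ u) (γ v) ≤ BS (γ u) (γ L1) + BS (γ L1) (γ v) :=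
              BS_triangle (hpos u hu) (hpos L1 hL1b) (hpos v hv)
          _ ≤ BS (γ u) (γ L1) + (BS (γ L1) (γ (L1 + D)) + BS (γ (L1 + D)) (γ v)) :=
              add_le_add_right (BS_triangle (hpos L1 hL1b) (hpos _ hL1Db) (hpos v hv)) _
          _ ≤ (f L1 - f u) + ((f (L1 + D) - f L1) + (f v - f (L1 + D))) := by
              refine add_le_add (hE1 u ⟨hu.1, h2⟩ L1 ⟨hL1, le_rfl⟩ h2) (add_le_add ?_ ?_)
              · exact hE2 L1 ⟨le_rfl, by linarith⟩ (L1 + D) ⟨by linarith, le_rfl⟩ (by linarith)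
              · exact hE3 (L1 + D) ⟨le_rfl, hL1Db.2⟩ v ⟨h3.le, hv.2⟩ h3.le
          _ = f v - f u := by ring
    · rcases le_or_gt v (L1 + D) with h3 | h3
      · exact hE2 u ⟨h2.le, by linarith⟩ v ⟨by linarith, h3⟩ huv
      rcases le_or_gt u (L1 + D) with h4 | h4
      · calc BS (γ u) (γ v) ≤ BS (γ u) (γ (L1 + D)) + BS (γ (L1 + D)) (γ v) :=
              BS_triangle (hpos u hu) (hpos _ hL1Db) (hpos v hv)
          _ ≤ (f (L1 + D) - f u) + (f v - f (L1 + D)) := add_le_add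
              (hE2 u ⟨h2.le, h4⟩ (L1 + D) ⟨by linarith, le_rfl⟩ h4)
              (hE3 (L1 + D) ⟨le_rfl, hL1Db.2⟩ v ⟨h3.le, hv.2⟩ h3.le)
          _ = f v - f u := by ring
      · exact hE3 u ⟨h4.le, hu.2⟩ v ⟨by linarith, hv.2⟩ huv
  have hclampcont : Continuous clamp := by
    simp only [hclamp]
    exact ((continuous_id.sub continuous_const).max continuous_const).min continuous_const
  have hαcont : ContinuousOn α (Icc 0 D) := by
    have : LipschitzOnWith 1 α (Icc 0 D) := by
      rw [lipschitzOnWith_iff_dist_le_mul]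
      intro a ha c hc
      rw [hαiso a ha c hc, Real.dist_eq]
      simp
    exact this.continuousOn
  have hcont : Continuous γ := by
    simp only [hγ]
    apply Continuous.if_le
    · exact continuous_const.prodMk (continuous_const.mul Real.continuous_exp)
    · apply Continuous.if_le
      · exact (hαcont.comp_continuous hclampcont hclamp_mem).prodMk continuous_const
      · exact continuous_const.prodMk (continuous_const.mul
          (Real.continuous_exp.comp (continuous_const.sub continuous_id)))
      · exact continuous_id
      · exact continuous_const
      · intro u hu
        subst hu
        rw [hclampL1D, hαD]
        have he : L1 + D - (L1 + D) = 0 := by ring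
        rw [he, Real.exp_zero, mul_one]
    · exact continuous_id
    · exact continuous_const
    · intro u hu
      have hu' : u = L1 := hu
      subst hu'
      rw [if_pos (by linarith : L1 ≤ L1 + D), hclampL1, hα0, hexp1]
  have hf0 : f 0 = 0 := by
    rw [hf1 0 ⟨le_rfl, hL1⟩]
  have hfb : f b = L1 + 2/h * D + L3 := by
    rw [hf3 b ⟨by simp only [hbdef]; linarith, le_rfl⟩, hbdef]
    ring
  refine le_trans (sInf_le ⟨0, b, γ, hb, hcont.continuousOn, hγ0, hγb, hmemγ, rfl⟩) ?_
  refine le_trans (lengthOn_le_of_bound BS γ hb f (hfmono.monotoneOn _) hKey) ?_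
  rw [hf0, hfb, sub_zero]

lemma h_facts {Y : Type*} [MetricSpace Y] {M : ℝ} {x y : Y × ℝ}
    (hx : inXM M x) (hy : inXM M y) :
    0 < min M (max (dist x.1 y.1) (max x.2 y.2)) ∧
    x.2 ≤ min M (max (dist x.1 y.1) (max x.2 y.2)) ∧
    y.2 ≤ min M (max (dist x.1 y.1) (max x.2 y.2)) ∧
    min M (max (dist x.1 y.1) (max x.2 y.2)) ≤ M := by
  have h1 : x.2 ≤ min M (max (dist x.1 y.1) (max x.2 y.2)) :=
    le_min hx.2 (le_max_of_le_right (le_max_left x.2 y.2))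
  have h2 : y.2 ≤ min M (max (dist x.1 y.1) (max x.2 y.2)) :=
    le_min hy.2 (le_max_of_le_right (le_max_right x.2 y.2))
  exact ⟨lt_of_lt_of_le hx.1 h1, h1, h2, min_le_left _ _⟩

lemma dLen_le {Y : Type*} [MetricSpace Y] [CompactSpace Y] (hgeo : GeodesicSpace Y)
    {M : ℝ} (hM : 0 < M) (x y : Y × ℝ) (hx : inXM M x) (hy : inXM M y) :
    dLen M x y ≤ (Real.log (min M (max (dist x.1 y.1) (max x.2 y.2))) - Real.log x.2)
      + (Real.log (min M (max (dist x.1 y.1) (max x.2 y.2))) - Real.log y.2)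
      + (2 + 2 * Metric.diam (Set.univ : Set Y) / M) := by
  obtain ⟨hh0, hxh, hyh, hhM⟩ := h_facts hx hy
  set h := min M (max (dist x.1 y.1) (max x.2 y.2)) with hh
  set D := dist x.1 y.1 with hD
  have hD0 : 0 ≤ D := dist_nonneg
  have hdiam0 : 0 ≤ Metric.diam (Set.univ : Set Y) := Metric.diam_nonneg
  have hDdiam : D ≤ Metric.diam (Set.univ : Set Y) :=
    Metric.dist_le_diam_of_mem isCompact_univ.isBounded (Set.mem_univ _) (Set.mem_univ _)
  have hkey : 2 / h * D ≤ 2 + 2 * Metric.diam (Set.univ : Set Y) / M := by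
    rcases le_or_gt D h with hc | hc
    · have : 2 / h * D ≤ 2 / h * h := by
        apply mul_le_mul_of_nonneg_left hc (by positivity)
      rw [div_mul_cancel₀ 2 hh0.ne'] at this
      have hpos2 : 0 ≤ 2 * Metric.diam (Set.univ : Set Y) / M := by positivity
      linarith
    · have hMle : M ≤ max D (max x.2 y.2) := by
        by_contra hcon
        push_neg at hcon
        have : h = max D (max x.2 y.2) := min_eq_right hcon.le
        have : D ≤ h := this ▸ le_max_left _ _
        linarith
      have hhm : h = M := min_eq_left hMle
      rw [hhm]
      have : 2 / M * D ≤ 2 / M * Metric.diam (Set.univ : Set Y) := by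
        apply mul_le_mul_of_nonneg_left hDdiam (by positivity)
      have heq : 2 / M * Metric.diam (Set.univ : Set Y) =
          2 * Metric.diam (Set.univ : Set Y) / M := by ring
      linarith
  have hub := sInf_le_bound hgeo hM x y hx hy
  have hB1 : (Real.log h - Real.log x.2) + 2 / h * D + (Real.log h - Real.log y.2) ≤
      (Real.log h - Real.log x.2) + (Real.log h - Real.log y.2)
      + (2 + 2 * Metric.diam (Set.univ : Set Y) / M) := by linarith
  have h1 : 0 ≤ Real.log h - Real.log x.2 := sub_nonneg.2 (Real.log_le_log hx.1 hxh)
  have h2 : 0 ≤ Real.log h - Real.log y.2 := sub_nonneg.2 (Real.log_le_log hy.1 hyh)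
  apply ENNReal.toReal_le_of_le_ofReal (by positivity)
  exact le_trans hub (ENNReal.ofReal_le_ofReal hB1)

lemma BS_le_dLen {Y : Type*} [MetricSpace Y] [CompactSpace Y] (hgeo : GeodesicSpace Y)
    {M : ℝ} (hM : 0 < M) (x y : Y × ℝ) (hx : inXM M x) (hy : inXM M y) :
    BS x y ≤ dLen M x y := by
  have hub := sInf_le_bound hgeo hM x y hx hy
  have hfin := (lt_of_le_of_lt hub ENNReal.ofReal_lt_top).ne
  have hlb : ENNReal.ofReal (BS x y) ≤ sInf {L : ENNReal | ∃ (a b : ℝ) (γ : ℝ → Y × ℝ), a ≤ b ∧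
      ContinuousOn γ (Icc a b) ∧ γ a = x ∧ γ b = y ∧
      (∀ t ∈ Icc a b, inXM M (γ t)) ∧
      lengthOn (BS (Y := Y)) γ (Icc a b) = L} := by
    apply le_sInf
    rintro L ⟨a, b, γ, hab, _, hγa, hγb, _, hL⟩
    rw [← hL]
    have := le_lengthOn BS γ hab
    rwa [hγa, hγb] at this
  calc BS x y = (ENNReal.ofReal (BS x y)).toReal :=
        (ENNReal.toReal_ofReal (BS_nonneg hx.1 hy.1)).symm
    _ ≤ dLen M x y := ENNReal.toReal_mono hfin hlb

lemma dLen_nonneg {Y : Type*} [MetricSpace Y] (M : ℝ) (x y : Y × ℝ) : 0 ≤ dLen M x y :=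
  ENNReal.toReal_nonneg

/-- The Gromov product `(x,y)_ω` with respect to the length metric `dLen M`. -/
noncomputable def gromovProd {Y : Type*} [MetricSpace Y] (M : ℝ) (ω x y : Y × ℝ) : ℝ :=
  (dLen M x ω + dLen M y ω - dLen M x y) / 2


lemma log_le_dLen {Y : Type*} [MetricSpace Y] [CompactSpace Y] (hgeo : GeodesicSpace Y)
    {M : ℝ} (hM : 0 < M) (x ω : Y × ℝ) (hx : inXM M x) (hω : inXM M ω) :
    Real.log ω.2 - Real.log x.2 ≤ dLen M x ω := by
  have h1 := BS_le_dLen hgeo hM x ω hx hω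
  rw [BS_eq hx.1 hω.1] at h1
  have harg : ω.2 ≤ dist x.1 ω.1 + max x.2 ω.2 :=
    le_add_of_nonneg_of_le dist_nonneg (le_max_right _ _)
  have h2 : Real.log ω.2 ≤ Real.log (dist x.1 ω.1 + max x.2 ω.2) :=
    Real.log_le_log hω.1 harg
  linarith

lemma gp_lower {Y : Type*} [MetricSpace Y] [CompactSpace Y] (hgeo : GeodesicSpace Y)
    {M : ℝ} (hM : 0 < M) (ω x y : Y × ℝ) (hω : inXM M ω) (hx : inXM M x) (hy : inXM M y) :
    Real.log ω.2 - Real.log (min M (max (dist x.1 y.1) (max x.2 y.2)))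
      - (2 + 2 * Metric.diam (Set.univ : Set Y) / M) / 2 ≤ gromovProd M ω x y := by
  have h1 := log_le_dLen hgeo hM x ω hx hω
  have h2 := log_le_dLen hgeo hM y ω hy hω
  have h3 := dLen_le hgeo hM x y hx hy
  unfold gromovProd
  linarith

lemma gp_upper {Y : Type*} [MetricSpace Y] [CompactSpace Y] (hgeo : GeodesicSpace Y)
    {M : ℝ} (hM : 0 < M) (ω x y : Y × ℝ) (hω : inXM M ω) (hx : inXM M x) (hy : inXM M y) :
    gromovProd M ω x y ≤ 2 * Real.log M - Real.log ω.2
      + (2 + 2 * Metric.diam (Set.univ : Set Y) / M)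
      - Real.log (min M (max (dist x.1 y.1) (max x.2 y.2))) := by
  obtain ⟨hh0, hxh, hyh, hhM⟩ := h_facts hx hy
  have h1 := dLen_le hgeo hM x ω hx hω
  have h2 := dLen_le hgeo hM y ω hy hω
  obtain ⟨hh0x, _, _, hhMx⟩ := h_facts hx hω
  obtain ⟨hh0y, _, _, hhMy⟩ := h_facts hy hω
  have hlogx : Real.log (min M (max (dist x.1 ω.1) (max x.2 ω.2))) ≤ Real.log M :=
    Real.log_le_log hh0x hhMx
  have hlogy : Real.log (min M (max (dist y.1 ω.1) (max y.2 ω.2))) ≤ Real.log M :=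
    Real.log_le_log hh0y hhMy
  have h3 := BS_le_dLen hgeo hM x y hx hy
  rw [BS_eq hx.1 hy.1] at h3
  have harg : min M (max (dist x.1 y.1) (max x.2 y.2)) ≤ dist x.1 y.1 + max x.2 y.2 := by
    refine le_trans (min_le_right _ _) (max_le ?_ ?_)
    · exact le_add_of_le_of_nonneg le_rfl (le_max_of_le_left hx.1.le)
    · exact le_add_of_nonneg_of_le dist_nonneg le_rfl
  have h4 : Real.log (min M (max (dist x.1 y.1) (max x.2 y.2))) ≤
      Real.log (dist x.1 y.1 + max x.2 y.2) := Real.log_le_log hh0 harg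
  unfold gromovProd
  linarith

/-- a sequence `x_i = (p_i, s_i)` in `X_M` converges at infinity
(the pairwise Gromov products tend to `∞`) iff `s_i → 0` and `(p_i)` converges in `Y`. -/
theorem stmt6 {Y : Type*} [MetricSpace Y] [CompactSpace Y] (hgeo : GeodesicSpace Y)
    {M : ℝ} (hM : 0 < M) (ω : Y × ℝ) (hω : inXM M ω)
    (p : ℕ → Y) (s : ℕ → ℝ) (hmem : ∀ i, inXM M (p i, s i)) :
    (∀ R : ℝ, ∃ N : ℕ, ∀ i ≥ N, ∀ j ≥ N, R ≤ gromovProd M ω (p i, s i) (p j, s j)) ↔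
      (Filter.Tendsto s Filter.atTop (nhds 0) ∧
        ∃ a : Y, Filter.Tendsto p Filter.atTop (nhds a)) := by
  set C := 2 + 2 * Metric.diam (Set.univ : Set Y) / M with hC
  have hs : ∀ i, 0 < s i := fun i => (hmem i).1
  constructor
  · intro H
    have key : ∀ ε : ℝ, 0 < ε → ε < M → ∃ N : ℕ, ∀ i ≥ N, ∀ j ≥ N,
        max (dist (p i) (p j)) (max (s i) (s j)) ≤ ε := by
      intro ε hε hεM
      obtain ⟨N, hN⟩ := H (2 * Real.log M - Real.log ω.2 + C - Real.log ε)
      refine ⟨N, fun i hi j hj => ?_⟩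
      have hgpu := gp_upper hgeo hM ω (p i, s i) (p j, s j) hω (hmem i) (hmem j)
      dsimp only at hgpu
      have hR := hN i hi j hj
      have hlog : Real.log (min M (max (dist (p i) (p j)) (max (s i) (s j)))) ≤
          Real.log ε := by rw [← hC] at hgpu; linarith
      have hpos : 0 < min M (max (dist (p i) (p j)) (max (s i) (s j))) :=
        (h_facts (x := (p i, s i)) (y := (p j, s j)) (hmem i) (hmem j)).1
      have hmin : min M (max (dist (p i) (p j)) (max (s i) (s j))) ≤ ε := by
        by_contra hcon
        push_neg at hcon
        exact absurd hlog (not_le.2 (Real.log_lt_log hε hcon))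
      rcases le_total M (max (dist (p i) (p j)) (max (s i) (s j))) with hc | hc
      · rw [min_eq_left hc] at hmin; linarith
      · rwa [min_eq_right hc] at hmin
    constructor
    · rw [Metric.tendsto_atTop]
      intro ε hε
      obtain ⟨N, hN⟩ := key (min (ε/2) (M/2)) (by positivity)
        (lt_of_le_of_lt (min_le_right _ _) (by linarith))
      refine ⟨N, fun i hi => ?_⟩
      have := hN i hi i hi
      have hsi : s i ≤ min (ε/2) (M/2) :=
        le_trans (le_trans (le_max_left _ _) (le_max_right _ _)) this
      rw [Real.dist_eq, sub_zero, abs_of_pos (hs i)]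
      exact lt_of_le_of_lt hsi (lt_of_le_of_lt (min_le_left _ _) (by linarith))
    · apply cauchySeq_tendsto_of_complete
      rw [Metric.cauchySeq_iff]
      intro ε hε
      obtain ⟨N, hN⟩ := key (min (ε/2) (M/2)) (by positivity)
        (lt_of_le_of_lt (min_le_right _ _) (by linarith))
      refine ⟨N, fun i hi j hj => ?_⟩
      have := hN i hi j hj
      have hd : dist (p i) (p j) ≤ min (ε/2) (M/2) := le_trans (le_max_left _ _) this
      exact lt_of_le_of_lt hd (lt_of_le_of_lt (min_le_left _ _) (by linarith))
  · rintro ⟨hs0, a, hpa⟩ R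
    set ε := Real.exp (Real.log ω.2 - C/2 - R) with hεdef
    have hε : 0 < ε := Real.exp_pos _
    rw [Metric.tendsto_atTop] at hs0 hpa
    obtain ⟨N1, hN1⟩ := hs0 ε hε
    obtain ⟨N2, hN2⟩ := hpa (ε/2) (by positivity)
    refine ⟨max N1 N2, fun i hi j hj => ?_⟩
    have hsi : s i ≤ ε := by
      have := hN1 i (le_trans (le_max_left _ _) hi)
      rw [Real.dist_eq, sub_zero, abs_of_pos (hs i)] at this
      exact this.le
    have hsj : s j ≤ ε := by
      have := hN1 j (le_trans (le_max_left _ _) hj)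
      rw [Real.dist_eq, sub_zero, abs_of_pos (hs j)] at this
      exact this.le
    have hdij : dist (p i) (p j) ≤ ε := by
      have h1 := hN2 i (le_trans (le_max_right _ _) hi)
      have h2 := hN2 j (le_trans (le_max_right _ _) hj)
      calc dist (p i) (p j) ≤ dist (p i) a + dist a (p j) := dist_triangle _ _ _
        _ ≤ ε/2 + ε/2 := add_le_add h1.le (by rw [dist_comm]; exact h2.le)
        _ = ε := by ring
    have hgpl := gp_lower hgeo hM ω (p i, s i) (p j, s j) hω (hmem i) (hmem j)
    dsimp only at hgpl
    rw [← hC] at hgpl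
    have hpos : 0 < min M (max (dist (p i) (p j)) (max (s i) (s j))) :=
      (h_facts (x := (p i, s i)) (y := (p j, s j)) (hmem i) (hmem j)).1
    have hle : min M (max (dist (p i) (p j)) (max (s i) (s j))) ≤ ε :=
      le_trans (min_le_right _ _) (max_le hdij (max_le hsi hsj))
    have hloge : Real.log (min M (max (dist (p i) (p j)) (max (s i) (s j)))) ≤
        Real.log ε := Real.log_le_log hpos hle
    rw [hεdef, Real.log_exp] at hloge
    linarith
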